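/- Assume K = [a,b] is a nondegenerate interval and Ũ is the subshift of finite type determined by the allowed word set W ⊆ {1,…,m}^L. Let E = {(u,v) ∈ {1,…,m}^{L−1} × {1,…,m}^{L−1} : (u_2,…,u_{L−1}) = (v_1,…,v_{L−2}) and (u_1,…,u_{L−1},v_{L−1}) ∈ W}. Then for each word u ∈ {1,…,m}^{L−1}: ⋃_{(u,v)∈E} f_{u_1}(J_v) ⊆ J_u, and for distinct v, v' with (u,v) ∈ E and (u,v') ∈ E one has f_{u_1}(J_v) ∩ f_{u_1}(J_{v'}) = ∅. -/

import Mathlib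

open Filter Topology Set

/-- `ifsIter m f i n = f_{i₁} ∘ ⋯ ∘ f_{iₙ} (0)`. -/
noncomputable def ifsIter (m : ℕ) (f : Fin m → ℝ → ℝ) : (ℕ → Fin m) → ℕ → ℝ
  | _, 0 => 0
  | i, n + 1 => f (i 0) (ifsIter m f (fun k => i (k + 1)) n)

/-- `wordIter m f d n x = f_{d 0} ∘ ⋯ ∘ f_{d (n-1)} (x)`. -/
noncomputable def wordIter (m : ℕ) (f : Fin m → ℝ → ℝ) : (ℕ → Fin m) → ℕ → ℝ → ℝ
  | _, 0, x => x
  | d, n + 1, x => f (d 0) (wordIter m f (fun k => d (k + 1)) n x)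

lemma ifsIter_eq_wordIter (m : ℕ) (f : Fin m → ℝ → ℝ) :
    ∀ (n : ℕ) (d : ℕ → Fin m), ifsIter m f d n = wordIter m f d n 0 := by
  intro n
  induction n with
  | zero => intro d; rfl
  | succ n ih => intro d; show f (d 0) _ = f (d 0) _; rw [ih]

lemma wordIter_succ_right (m : ℕ) (f : Fin m → ℝ → ℝ) :
    ∀ (n : ℕ) (d : ℕ → Fin m) (y : ℝ),
      wordIter m f d (n + 1) y = wordIter m f d n (f (d n) y) := by
  intro n
  induction n with
  | zero => intro d y; rfl
  | succ n ih =>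
    intro d y
    show f (d 0) (wordIter m f (fun k => d (k+1)) (n+1) y) = f (d 0) _
    rw [ih]

lemma wordIter_congr (m : ℕ) (f : Fin m → ℝ → ℝ) :
    ∀ (n : ℕ) (d d' : ℕ → Fin m) (x : ℝ), (∀ i < n, d i = d' i) →
      wordIter m f d n x = wordIter m f d' n x := by
  intro n
  induction n with
  | zero => intro d d' x _; rfl
  | succ n ih =>
    intro d d' x h
    show f (d 0) _ = f (d' 0) _
    rw [h 0 (Nat.succ_pos n), ih (fun k => d (k+1)) (fun k => d' (k+1)) x
      (fun i hi => h (i+1) (by omega))]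

lemma wordIter_affine (m : ℕ) (r a : Fin m → ℝ) (hr : ∀ j, 0 < r j ∧ r j < 1)
    (f : Fin m → ℝ → ℝ) (hf : ∀ j x, f j x = r j * x + a j)
    (ρ : ℝ) (hρ : ∀ j, r j ≤ ρ) (hρ0 : 0 ≤ ρ) :
    ∀ (n : ℕ) (d : ℕ → Fin m), ∃ R S : ℝ, 0 < R ∧ R ≤ ρ ^ n ∧
      ∀ x, wordIter m f d n x = R * x + S := by
  intro n
  induction n with
  | zero => intro d; exact ⟨1, 0, one_pos, by norm_num, fun x => by simp [wordIter]⟩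
  | succ n ih =>
    intro d
    obtain ⟨R, S, hR0, hRle, hRS⟩ := ih (fun k => d (k + 1))
    refine ⟨r (d 0) * R, r (d 0) * S + a (d 0), mul_pos (hr _).1 hR0, ?_, fun x => ?_⟩
    · calc r (d 0) * R ≤ ρ * ρ ^ n :=
            mul_le_mul (hρ _) hRle hR0.le hρ0
        _ = ρ ^ (n + 1) := (pow_succ' ρ n).symm
    · show f (d 0) (wordIter m f (fun k => d (k+1)) n x) = _
      rw [hf, hRS]; ring

lemma wordIter_mem (m : ℕ) (f : Fin m → ℝ → ℝ) (K : Set ℝ)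
    (hKattr : K = ⋃ j, f j '' K) :
    ∀ (n : ℕ) (d : ℕ → Fin m) (x : ℝ), x ∈ K → wordIter m f d n x ∈ K := by
  intro n
  induction n with
  | zero => intro d x hx; exact hx
  | succ n ih =>
    intro d x hx
    show f (d 0) (wordIter m f (fun k => d (k+1)) n x) ∈ K
    rw [hKattr]
    exact mem_iUnion.2 ⟨d 0, ⟨_, ih _ x hx, rfl⟩⟩

lemma proj_cons (m : ℕ) (r a : Fin m → ℝ)
    (f : Fin m → ℝ → ℝ) (hf : ∀ j x, f j x = r j * x + a j)
    (proj : (ℕ → Fin m) → ℝ)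
    (hproj : ∀ i : ℕ → Fin m, Tendsto (ifsIter m f i) atTop (𝓝 (proj i)))
    (d : ℕ → Fin m) : proj d = f (d 0) (proj (fun k => d (k + 1))) := by
  have h1 := (hproj d).comp (tendsto_add_atTop_nat 1)
  have hc : Continuous (f (d 0)) := by
    have : f (d 0) = fun x => r (d 0) * x + a (d 0) := funext (hf _)
    rw [this]; continuity
  have h3 := (hc.tendsto _).comp (hproj (fun k => d (k + 1)))
  exact tendsto_nhds_unique h1 h3

lemma proj_eq_wordIter (m : ℕ) (r a : Fin m → ℝ)
    (f : Fin m → ℝ → ℝ) (hf : ∀ j x, f j x = r j * x + a j)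
    (proj : (ℕ → Fin m) → ℝ)
    (hproj : ∀ i : ℕ → Fin m, Tendsto (ifsIter m f i) atTop (𝓝 (proj i))) :
    ∀ (n : ℕ) (d : ℕ → Fin m),
      proj d = wordIter m f d n (proj (fun k => d (k + n))) := by
  intro n
  induction n with
  | zero => intro d; rfl
  | succ n ih =>
    intro d
    rw [proj_cons m r a f hf proj hproj d, ih (fun k => d (k + 1))]
    rfl

lemma exists_rho (m : ℕ) (hm : 2 ≤ m) (r : Fin m → ℝ) (hr : ∀ j, 0 < r j ∧ r j < 1) :
    ∃ ρ : ℝ, 0 ≤ ρ ∧ ρ < 1 ∧ ∀ j, r j ≤ ρ := by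
  have hne : (Finset.univ : Finset (Fin m)).Nonempty := ⟨⟨0, by omega⟩, Finset.mem_univ _⟩
  refine ⟨Finset.univ.sup' hne r,
    le_trans (hr ⟨0, by omega⟩).1.le (Finset.le_sup' r (Finset.mem_univ _)),
    (Finset.sup'_lt_iff hne).2 (fun j _ => (hr j).2),
    fun j => Finset.le_sup' r (Finset.mem_univ j)⟩

lemma proj_mem (m : ℕ) (hm : 2 ≤ m) (r a : Fin m → ℝ) (hr : ∀ j, 0 < r j ∧ r j < 1)
    (f : Fin m → ℝ → ℝ) (hf : ∀ j x, f j x = r j * x + a j)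
    (A B : ℝ) (hAB : A < B) (K : Set ℝ) (hK : K = Icc A B) (hKattr : K = ⋃ j, f j '' K)
    (proj : (ℕ → Fin m) → ℝ)
    (hproj : ∀ i : ℕ → Fin m, Tendsto (ifsIter m f i) atTop (𝓝 (proj i)))
    (d : ℕ → Fin m) : proj d ∈ K := by
  obtain ⟨ρ, hρ0, hρ1, hρ⟩ := exists_rho m hm r hr
  have hdiff : ∀ n, |wordIter m f d n A - ifsIter m f d n| ≤ ρ ^ n * |A| := by
    intro n
    obtain ⟨R, S, hR0, hRle, hRS⟩ := wordIter_affine m r a hr f hf ρ hρ hρ0 n d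
    rw [ifsIter_eq_wordIter, hRS, hRS]
    have h1 : R * A + S - (R * 0 + S) = R * A := by ring
    rw [h1, abs_mul, abs_of_pos hR0]
    exact mul_le_mul_of_nonneg_right hRle (abs_nonneg A)
  have hz : Tendsto (fun n => wordIter m f d n A - ifsIter m f d n) atTop (𝓝 0) := by
    apply squeeze_zero_norm hdiff
    simpa using (tendsto_pow_atTop_nhds_zero_of_lt_one hρ0 hρ1).mul_const |A|
  have key : Tendsto (fun n => wordIter m f d n A) atTop (𝓝 (proj d)) := by
    have := hz.add (hproj d)
    simpa using this
  have hAK : A ∈ K := by rw [hK]; exact ⟨le_refl A, hAB.le⟩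
  exact (hK ▸ isClosed_Icc).mem_of_tendsto key
    (Filter.Eventually.of_forall (fun n => wordIter_mem m f K hKattr n d A hAK))

lemma proj_surj (m : ℕ) (hm : 2 ≤ m) (r a : Fin m → ℝ) (hr : ∀ j, 0 < r j ∧ r j < 1)
    (f : Fin m → ℝ → ℝ) (hf : ∀ j x, f j x = r j * x + a j)
    (A B : ℝ) (hAB : A < B) (K : Set ℝ) (hK : K = Icc A B) (hKattr : K = ⋃ j, f j '' K)
    (proj : (ℕ → Fin m) → ℝ)
    (hproj : ∀ i : ℕ → Fin m, Tendsto (ifsIter m f i) atTop (𝓝 (proj i)))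
    (x : ℝ) (hx : x ∈ K) : ∃ e : ℕ → Fin m, proj e = x := by
  obtain ⟨ρ, hρ0, hρ1, hρ⟩ := exists_rho m hm r hr
  have hex : ∀ y : ℝ, ∃ p : Fin m × ℝ, y ∈ K → p.2 ∈ K ∧ f p.1 p.2 = y := by
    intro y
    by_cases hy : y ∈ K
    · have h2 : y ∈ ⋃ j, f j '' K := hKattr ▸ hy
      rw [mem_iUnion] at h2
      obtain ⟨j, z, hz, hfz⟩ := h2
      exact ⟨(j, z), fun _ => ⟨hz, hfz⟩⟩
    · exact ⟨(⟨0, by omega⟩, 0), fun h => absurd h hy⟩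
  choose g hg using hex
  set seq : ℕ → ℝ := fun n => Nat.rec x (fun _ y => (g y).2) n with hseq
  set e : ℕ → Fin m := fun n => (g (seq n)).1 with he
  have hseqK : ∀ n, seq n ∈ K := by
    intro n
    induction n with
    | zero => exact hx
    | succ n ih => exact (hg _ ih).1
  have hinv : ∀ n, wordIter m f e n (seq n) = x := by
    intro n
    induction n with
    | zero => rfl
    | succ n ih =>
      rw [wordIter_succ_right]
      have h3 : f (e n) (seq (n + 1)) = seq n := (hg _ (hseqK n)).2
      rw [h3, ih]
  set C : ℝ := max |A| |B| with hC
  have hseqC : ∀ n, |seq n| ≤ C := by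
    intro n
    have h4 := hseqK n
    rw [hK] at h4
    rw [abs_le]
    constructor
    · calc -C ≤ -|A| := by simp [hC]
        _ ≤ A := neg_abs_le A
        _ ≤ seq n := h4.1
    · calc seq n ≤ B := h4.2
        _ ≤ |B| := le_abs_self B
        _ ≤ C := le_max_right _ _
  have hbound : ∀ n, |ifsIter m f e n - x| ≤ ρ ^ n * C := by
    intro n
    obtain ⟨R, S, hR0, hRle, hRS⟩ := wordIter_affine m r a hr f hf ρ hρ hρ0 n e
    rw [ifsIter_eq_wordIter, ← hinv n, hRS, hRS]
    have h1 : R * 0 + S - (R * seq n + S) = R * (-(seq n)) := by ring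
    rw [h1, abs_mul, abs_of_pos hR0, abs_neg]
    exact mul_le_mul hRle (hseqC n) (abs_nonneg _) (by positivity)
  have hz : Tendsto (fun n => ifsIter m f e n - x) atTop (𝓝 0) := by
    apply squeeze_zero_norm hbound
    simpa using (tendsto_pow_atTop_nhds_zero_of_lt_one hρ0 hρ1).mul_const C
  have key : Tendsto (ifsIter m f e) atTop (𝓝 x) := by
    have := hz.add (tendsto_const_nhds (x := x))
    simpa using this
  exact ⟨e, tendsto_nhds_unique (hproj e) key⟩

lemma combo_le {y z c al be : ℝ} (ha : 0 ≤ al) (hb : 0 ≤ be) (hab : al + be = 1)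
    (h1 : c ≤ y) (h2 : c ≤ z) : c ≤ al * y + be * z := by
  have h3 : al * c + be * c = c := by rw [← add_mul, hab, one_mul]
  have h4 := mul_le_mul_of_nonneg_left h1 ha
  have h5 := mul_le_mul_of_nonneg_left h2 hb
  linarith

lemma combo_ge {y z c al be : ℝ} (ha : 0 ≤ al) (hb : 0 ≤ be) (hab : al + be = 1)
    (h1 : y ≤ c) (h2 : z ≤ c) : al * y + be * z ≤ c := by
  have h3 : al * c + be * c = c := by rw [← add_mul, hab, one_mul]
  have h4 := mul_le_mul_of_nonneg_left h1 ha
  have h5 := mul_le_mul_of_nonneg_left h2 hb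
  linarith

lemma hull_between (S : Set ℝ) (x : ℝ) (hx : x ∈ convexHull ℝ S) :
    ∃ p ∈ S, ∃ q ∈ S, p ≤ x ∧ x ≤ q := by
  have hsub : convexHull ℝ S ⊆ {y | ∃ p ∈ S, ∃ q ∈ S, p ≤ y ∧ y ≤ q} := by
    apply convexHull_min
    · exact fun s hs => ⟨s, hs, s, hs, le_refl s, le_refl s⟩
    · intro y hy z hz al be ha hb hab
      obtain ⟨p, hp, q, hq, h1, h2⟩ := hy
      obtain ⟨p', hp', q', hq', h3, h4⟩ := hz
      simp only [smul_eq_mul, mem_setOf_eq]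
      rcases le_total p p' with hpp | hpp
      · rcases le_total q q' with hqq | hqq
        · exact ⟨p, hp, q', hq', combo_le ha hb hab h1 (hpp.trans h3),
            combo_ge ha hb hab (h2.trans hqq) h4⟩
        · exact ⟨p, hp, q, hq, combo_le ha hb hab h1 (hpp.trans h3),
            combo_ge ha hb hab h2 (h4.trans hqq)⟩
      · rcases le_total q q' with hqq | hqq
        · exact ⟨p', hp', q', hq', combo_le ha hb hab (hpp.trans h1) h3,
            combo_ge ha hb hab (h2.trans hqq) h4⟩
        · exact ⟨p', hp', q, hq, combo_le ha hb hab (hpp.trans h1) h3,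
            combo_ge ha hb hab h2 (h4.trans hqq)⟩
  exact hsub hx

lemma no_between (m : ℕ) (hm : 2 ≤ m) (r a : Fin m → ℝ)
    (hr : ∀ j, 0 < r j ∧ r j < 1)
    (f : Fin m → ℝ → ℝ) (hf : ∀ j x, f j x = r j * x + a j)
    (A B : ℝ) (hAB : A < B)
    (K : Set ℝ) (hK : K = Icc A B) (hKattr : K = ⋃ j, f j '' K)
    (proj : (ℕ → Fin m) → ℝ)
    (hproj : ∀ i : ℕ → Fin m, Tendsto (ifsIter m f i) atTop (𝓝 (proj i)))
    (U : Set ℝ)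
    (hU : U = {x | x ∈ K ∧ ∃! i : ℕ → Fin m, Tendsto (ifsIter m f i) atTop (𝓝 x)})
    (Ut : Set (ℕ → Fin m)) (hUt : Ut = proj ⁻¹' U)
    (ℓ : ℕ)
    (Ku : (Fin (ℓ + 1) → Fin m) → Set ℝ)
    (hKu : ∀ u, Ku u = {y | ∃ d ∈ Ut, (∀ i : Fin (ℓ + 1), d i = u i) ∧ proj d = y})
    (v v' : Fin (ℓ + 1) → Fin m) (hvv : v ≠ v')
    (z : ℝ) (hz : z ∈ Ku v) (p q : ℝ) (hp : p ∈ Ku v') (hq : q ∈ Ku v')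
    (hpz : p ≤ z) (hzq : z ≤ q) : False := by
  obtain ⟨ρ, hρ0, hρ1, hρ⟩ := exists_rho m hm r hr
  rw [hKu] at hz hp hq
  obtain ⟨d, hdU, hdpre, hdz⟩ := hz
  obtain ⟨d2, hd2U, hd2pre, hd2p⟩ := hp
  obtain ⟨d3, hd3U, hd3pre, hd3q⟩ := hq
  set c2 := proj (fun k => d2 (k + (ℓ + 1))) with hc2
  set c3 := proj (fun k => d3 (k + (ℓ + 1))) with hc3
  have hc2K : c2 ∈ K := proj_mem m hm r a hr f hf A B hAB K hK hKattr proj hproj _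
  have hc3K : c3 ∈ K := proj_mem m hm r a hr f hf A B hAB K hK hKattr proj hproj _
  obtain ⟨R, S, hR0, hRle, hRS⟩ := wordIter_affine m r a hr f hf ρ hρ hρ0 (ℓ + 1) d2
  have hsame : ∀ i < (ℓ + 1), d3 i = d2 i := by
    intro i hi
    have h1 := hd3pre ⟨i, hi⟩
    have h2 := hd2pre ⟨i, hi⟩
    simp only at h1 h2
    rw [h1, h2]
  have hpv : p = R * c2 + S := by
    rw [← hd2p, proj_eq_wordIter m r a f hf proj hproj (ℓ + 1) d2, ← hc2, hRS]
  have hqv : q = R * c3 + S := by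
    rw [← hd3q, proj_eq_wordIter m r a f hf proj hproj (ℓ + 1) d3, ← hc3,
      wordIter_congr m f (ℓ + 1) d3 d2 _ hsame, hRS]
  set c : ℝ := (z - S) / R with hc
  have hcc : c2 ≤ c ∧ c ≤ c3 := by
    constructor
    · rw [le_div_iff₀ hR0]; linarith [hpv ▸ hpz]
    · rw [div_le_iff₀ hR0]; linarith [hqv ▸ hzq]
  have hcK : c ∈ K := by
    rw [hK] at hc2K hc3K ⊢
    exact ⟨hc2K.1.trans hcc.1, hcc.2.trans hc3K.2⟩
  obtain ⟨e, hez⟩ := proj_surj m hm r a hr f hf A B hAB K hK hKattr proj hproj c hcK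
  set d'' : ℕ → Fin m := fun k => if h : k < (ℓ + 1) then d2 k else e (k - (ℓ + 1)) with hd''
  have hsh : (fun k => d'' (k + (ℓ + 1))) = e := by
    funext k
    simp only [hd'']
    rw [dif_neg (by omega)]
    congr 1
    omega
  have hd''z : proj d'' = z := by
    rw [proj_eq_wordIter m r a f hf proj hproj (ℓ + 1) d'', hsh, hez,
      wordIter_congr m f (ℓ + 1) d'' d2 c (fun i hi => by simp only [hd'']; rw [dif_pos hi]),
      hRS, hc]
    field_simp
    ring
  have hzU : z ∈ U := by
    have h5 : d ∈ proj ⁻¹' U := hUt ▸ hdU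
    rw [mem_preimage, hdz] at h5
    exact h5
  rw [hU] at hzU
  obtain ⟨-, i0, hi0, huniq⟩ := hzU
  have e1 : d = i0 := huniq d (hdz ▸ hproj d)
  have e2 : d'' = i0 := huniq d'' (hd''z ▸ hproj d'')
  have hex : ∃ i : Fin (ℓ + 1), v i ≠ v' i := by
    by_contra h
    push_neg at h
    exact hvv (funext h)
  obtain ⟨i, hi⟩ := hex
  apply hi
  calc v i = d i := (hdpre i).symm
    _ = d'' i := by rw [e1, ← e2]
    _ = d2 i := by simp only [hd'']; rw [dif_pos i.isLt]
    _ = v' i := hd2pre i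

/-- in the graph-directed construction for `Ũ`, for each word `u` of
length `L−1` we have `⋃_{(u,v)∈E} f_{u₁}(J_v) ⊆ J_u`, and the sets `f_{u₁}(J_v)` for
distinct edges `(u,v), (u,v')` are disjoint. -/
theorem stmt15 (m : ℕ) (hm : 2 ≤ m) (r a : Fin m → ℝ)
    (hr : ∀ j, 0 < r j ∧ r j < 1)
    (f : Fin m → ℝ → ℝ) (hf : ∀ j x, f j x = r j * x + a j)
    (A B : ℝ) (hAB : A < B)
    (K : Set ℝ) (hK : K = Icc A B) (hKattr : K = ⋃ j, f j '' K)
    (proj : (ℕ → Fin m) → ℝ)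
    (hproj : ∀ i : ℕ → Fin m, Tendsto (ifsIter m f i) atTop (𝓝 (proj i)))
    (U : Set ℝ)
    (hU : U = {x | x ∈ K ∧ ∃! i : ℕ → Fin m, Tendsto (ifsIter m f i) atTop (𝓝 x)})
    (Ut : Set (ℕ → Fin m)) (hUt : Ut = proj ⁻¹' U)
    (ℓ : ℕ) (W : Set (Fin (ℓ + 2) → Fin m))
    (hSFT : Ut = {x : ℕ → Fin m | ∀ k : ℕ, (fun j : Fin (ℓ + 2) => x (k + j)) ∈ W})
    (Ku : (Fin (ℓ + 1) → Fin m) → Set ℝ)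
    (hKu : ∀ u, Ku u = {y | ∃ d ∈ Ut, (∀ i : Fin (ℓ + 1), d i = u i) ∧ proj d = y})
    (E : (Fin (ℓ + 1) → Fin m) → (Fin (ℓ + 1) → Fin m) → Prop)
    (hE : ∀ u v, E u v ↔
      (∀ i : Fin ℓ, u i.succ = v i.castSucc) ∧ Fin.snoc u (v (Fin.last ℓ)) ∈ W) :
    ∀ u : Fin (ℓ + 1) → Fin m,
      (⋃ (v : Fin (ℓ + 1) → Fin m) (_ : E u v),
        f (u 0) '' convexHull ℝ (Ku v)) ⊆ convexHull ℝ (Ku u) ∧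
      ∀ v v' : Fin (ℓ + 1) → Fin m, E u v → E u v' → v ≠ v' →
        f (u 0) '' convexHull ℝ (Ku v) ∩ f (u 0) '' convexHull ℝ (Ku v') = ∅ := by
  intro u
  have hmono : ∀ x y : ℝ, x ≤ y → f (u 0) x ≤ f (u 0) y := by
    intro x y hxy
    rw [hf, hf]
    have := (hr (u 0)).1
    nlinarith
  constructor
  · -- part 1
    intro x hx
    simp only [mem_iUnion] at hx
    obtain ⟨v, hEv, y, hy, hfy⟩ := hx
    obtain ⟨hE1, hE2⟩ := (hE u v).1 hEv
    -- image of Ku v under f (u 0) lands in Ku u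
    have himg : ∀ w ∈ Ku v, f (u 0) w ∈ Ku u := by
      intro w hw
      rw [hKu] at hw ⊢
      obtain ⟨d, hdU, hdpre, hdw⟩ := hw
      set d' : ℕ → Fin m := fun k => Nat.casesOn k (u 0) d with hd'
      have hshift : (fun k => d' (k + 1)) = d := funext fun k => rfl
      have hpre' : ∀ i : Fin (ℓ + 1), d' i = u i := by
        intro i
        induction i using Fin.cases with
        | zero => rfl
        | succ i' =>
          have h1 : (d' ↑(i'.succ) : Fin m) = d ↑(i'.castSucc) := by
            simp only [Fin.val_succ, Fin.coe_castSucc, hd']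
          rw [h1, hdpre i'.castSucc, ← hE1 i']
      refine ⟨d', ?_, hpre', ?_⟩
      · rw [hSFT]
        rw [hSFT] at hdU
        intro k
        cases k with
        | zero =>
          have hwin : (fun j : Fin (ℓ + 2) => d' (0 + ↑j)) =
              Fin.snoc u (v (Fin.last ℓ)) := by
            funext j
            simp only [Nat.zero_add]
            induction j using Fin.lastCases with
            | last =>
              have h2 : d' (↑(Fin.last (ℓ + 1))) = d ℓ := rfl
              rw [h2, Fin.snoc_last]
              have h3 := hdpre (Fin.last ℓ)
              simpa using h3
            | cast i =>
              rw [Fin.snoc_castSucc]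
              induction i using Fin.cases with
              | zero => rfl
              | succ i' =>
                have h4 : (d' ↑((i'.succ).castSucc) : Fin m) = d ↑(i'.castSucc) := rfl
                rw [h4, hdpre i'.castSucc, ← hE1 i']
          exact hwin ▸ hE2
        | succ k' =>
          have h5 := hdU k'
          have h6 : (fun j : Fin (ℓ + 2) => d' (k' + 1 + ↑j)) =
              (fun j : Fin (ℓ + 2) => d (k' + ↑j)) := by
            funext j
            have h7 : k' + 1 + (j : ℕ) = (k' + ↑j) + 1 := by omega
            rw [h7]
          rw [h6]
          exact h5
      · rw [proj_cons m r a f hf proj hproj d', hshift]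
        show f (u 0) (proj d) = f (u 0) w
        rw [hdw]
    obtain ⟨p, hp, q, hq, hpy, hyq⟩ := hull_between _ _ hy
    have hcvx := (convex_convexHull ℝ (Ku u)).ordConnected
    have hmem := hcvx.out (subset_convexHull ℝ _ (himg p hp))
      (subset_convexHull ℝ _ (himg q hq))
    rw [← hfy]
    exact hmem ⟨hmono _ _ hpy, hmono _ _ hyq⟩
  · -- part 2
    intro v v' hEv hEv' hvv
    rw [eq_empty_iff_forall_notMem]
    rintro t ⟨⟨x1, hx1, hfx1⟩, ⟨x2, hx2, hfx2⟩⟩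
    have hx12 : x1 = x2 := by
      have h1 : f (u 0) x1 = f (u 0) x2 := hfx1.trans hfx2.symm
      rw [hf, hf] at h1
      have h2 := (hr (u 0)).1
      have h3 : r (u 0) * x1 = r (u 0) * x2 := by linarith
      exact mul_left_cancel₀ (ne_of_gt h2) h3
    obtain ⟨p1, hp1, q1, hq1, h11, h12⟩ := hull_between _ _ hx1
    obtain ⟨p2, hp2, q2, hq2, h21, h22⟩ := hull_between _ _ hx2
    rcases le_total p2 p1 with hpp | hpp
    · exact no_between m hm r a hr f hf A B hAB K hK hKattr proj hproj U hU Ut hUt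
        ℓ Ku hKu v v' hvv p1 hp1 p2 q2 hp2 hq2 hpp (by linarith)
    · exact no_between m hm r a hr f hf A B hAB K hK hKattr proj hproj U hU Ut hUt
        ℓ Ku hKu v' v (Ne.symm hvv) p2 hp2 p1 q1 hp1 hq1 hpp (by linarith)
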